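/- Let y_t ∈ ℂ with Re[y_t] > 0 and consider the real symmetric 6×6 block matrix G_{YΔ} = [[Re[Y2], Re[Y3]], [Re[Y3]ᵀ, Re[Y2]]], where Y2 = (y_t/3)·[[2,−1,−1],[−1,2,−1],[−1,−1,2]] and Y3 = (y_t/√3)·[[−1,1,0],[0,−1,1],[1,0,−1]]. Then G_{YΔ} is positive semidefinite and its set of eigenvalues equals {0, 2·Re[y_t]}. -/

import Mathlib

open Matrix

/-- auxiliary: the 3×3 "wye" pattern matrix. -/
def Pmat : Matrix (Fin 3) (Fin 3) ℝ := !![2, -1, -1; -1, 2, -1; -1, -1, 2]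

/-- auxiliary: the 3×3 "delta" pattern matrix. -/
def Qmat : Matrix (Fin 3) (Fin 3) ℝ := !![-1, 1, 0; 0, -1, 1; 1, 0, -1]

lemma Pmat_mul_Pmat : Pmat * Pmat = 3 • Pmat := by
  ext i j; fin_cases i <;> fin_cases j <;>
    norm_num [Matrix.mul_apply, Fin.sum_univ_three, Pmat, Matrix.vecHead, Matrix.vecTail, Matrix.cons_val_two]

lemma Qmat_mul_QmatT : Qmat * Qmatᵀ = Pmat := by
  ext i j; fin_cases i <;> fin_cases j <;>
    norm_num [Matrix.mul_apply, Fin.sum_univ_three, Pmat, Qmat, Matrix.vecHead, Matrix.vecTail, Matrix.cons_val_two]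

lemma QmatT_mul_Qmat : Qmatᵀ * Qmat = Pmat := by
  ext i j; fin_cases i <;> fin_cases j <;>
    norm_num [Matrix.mul_apply, Fin.sum_univ_three, Pmat, Qmat, Matrix.vecHead, Matrix.vecTail, Matrix.cons_val_two]

lemma Pmat_mul_Qmat : Pmat * Qmat = 3 • Qmat := by
  ext i j; fin_cases i <;> fin_cases j <;>
    norm_num [Matrix.mul_apply, Fin.sum_univ_three, Pmat, Qmat, Matrix.vecHead, Matrix.vecTail, Matrix.cons_val_two]

lemma Qmat_mul_Pmat : Qmat * Pmat = 3 • Qmat := by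
  ext i j; fin_cases i <;> fin_cases j <;>
    norm_num [Matrix.mul_apply, Fin.sum_univ_three, Pmat, Qmat, Matrix.vecHead, Matrix.vecTail, Matrix.cons_val_two]

lemma Pmat_mul_QmatT : Pmat * Qmatᵀ = 3 • Qmatᵀ := by
  ext i j; fin_cases i <;> fin_cases j <;>
    norm_num [Matrix.mul_apply, Fin.sum_univ_three, Pmat, Qmat, Matrix.vecHead, Matrix.vecTail, Matrix.cons_val_two]

lemma QmatT_mul_Pmat : Qmatᵀ * Pmat = 3 • Qmatᵀ := by
  ext i j; fin_cases i <;> fin_cases j <;>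
    norm_num [Matrix.mul_apply, Fin.sum_univ_three, Pmat, Qmat, Matrix.vecHead, Matrix.vecTail, Matrix.cons_val_two]

lemma Pmat_symm : Pmatᵀ = Pmat := by
  ext i j; fin_cases i <;> fin_cases j <;>
    norm_num [Pmat, Matrix.vecHead, Matrix.vecTail, Matrix.cons_val_two]

/-- The key algebraic identity: `G * G = (2a) • G`. -/
lemma Gblock_sq (a s : ℝ) (hs : s * s = 3) :
    (fromBlocks ((a/3) • Pmat) ((a*s/3) • Qmat) ((a*s/3) • Qmatᵀ) ((a/3) • Pmat)) *
      (fromBlocks ((a/3) • Pmat) ((a*s/3) • Qmat) ((a*s/3) • Qmatᵀ) ((a/3) • Pmat)) =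
    (2*a) • (fromBlocks ((a/3) • Pmat) ((a*s/3) • Qmat) ((a*s/3) • Qmatᵀ) ((a/3) • Pmat)) := by
  rw [fromBlocks_multiply, fromBlocks_smul, fromBlocks_inj]
  refine ⟨?_, ?_, ?_, ?_⟩ <;>
  · rw [Matrix.smul_mul, Matrix.smul_mul, Matrix.mul_smul, Matrix.mul_smul]
    simp only [Pmat_mul_Pmat, Qmat_mul_QmatT, QmatT_mul_Qmat, Pmat_mul_Qmat, Qmat_mul_Pmat,
      Pmat_mul_QmatT, QmatT_mul_Pmat, smul_smul, ← add_smul, ← Nat.cast_smul_eq_nsmul ℝ]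
    congr 1
    nlinarith [hs]


lemma Pmat_mulVec_ones : Pmat *ᵥ ![(1:ℝ),1,1] = 0 := by
  funext i; fin_cases i <;>
    norm_num [Pmat, Matrix.mulVec, dotProduct, Fin.sum_univ_three,
      Matrix.vecHead, Matrix.vecTail, Matrix.cons_val_two]

lemma Qmat_mulVec_ones : Qmat *ᵥ ![(1:ℝ),1,1] = 0 := by
  funext i; fin_cases i <;>
    norm_num [Qmat, Matrix.mulVec, dotProduct, Fin.sum_univ_three,
      Matrix.vecHead, Matrix.vecTail, Matrix.cons_val_two]

lemma QmatT_mulVec_ones : Qmatᵀ *ᵥ ![(1:ℝ),1,1] = 0 := by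
  funext i; fin_cases i <;>
    norm_num [Qmat, Matrix.mulVec, dotProduct, Fin.sum_univ_three,
      Matrix.vecHead, Matrix.vecTail, Matrix.cons_val_two]

lemma Gblock_mulVec_ones (a s : ℝ) :
    (fromBlocks ((a/3) • Pmat) ((a*s/3) • Qmat) ((a*s/3) • Qmatᵀ) ((a/3) • Pmat)) *ᵥ
      (Sum.elim ![(1:ℝ),1,1] ![(1:ℝ),1,1]) = 0 := by
  rw [fromBlocks_mulVec]
  simp only [Sum.elim_comp_inl, Sum.elim_comp_inr, Matrix.smul_mulVec,
    Pmat_mulVec_ones, Qmat_mulVec_ones, QmatT_mulVec_ones, smul_zero, add_zero]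
  funext i; rcases i with i | i <;> rfl

lemma Pmat_mulVec_u : Pmat *ᵥ ![(2:ℝ),-1,-1] = ![6,-3,-3] := by
  funext i; fin_cases i <;>
    norm_num [Pmat, Matrix.mulVec, dotProduct, Fin.sum_univ_three,
      Matrix.vecHead, Matrix.vecTail, Matrix.cons_val_two]

lemma Qmat_mulVec_w (s : ℝ) : Qmat *ᵥ ![-s,s,0] = ![2*s,-s,-s] := by
  funext i; fin_cases i <;>
    · norm_num [Qmat, Matrix.mulVec, dotProduct, Fin.sum_univ_three,
        Matrix.vecHead, Matrix.vecTail, Matrix.cons_val_two]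
      try ring

lemma QmatT_mulVec_u : Qmatᵀ *ᵥ ![(2:ℝ),-1,-1] = ![-3,3,0] := by
  funext i; fin_cases i <;>
    norm_num [Qmat, Matrix.mulVec, dotProduct, Fin.sum_univ_three,
      Matrix.vecHead, Matrix.vecTail, Matrix.cons_val_two]

lemma Pmat_mulVec_w (s : ℝ) : Pmat *ᵥ ![-s,s,0] = ![-3*s,3*s,0] := by
  funext i; fin_cases i <;>
    · norm_num [Pmat, Matrix.mulVec, dotProduct, Fin.sum_univ_three,
        Matrix.vecHead, Matrix.vecTail, Matrix.cons_val_two]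
      try ring

lemma Gblock_mulVec_v2 (a s : ℝ) (hs : s * s = 3) :
    (fromBlocks ((a/3) • Pmat) ((a*s/3) • Qmat) ((a*s/3) • Qmatᵀ) ((a/3) • Pmat)) *ᵥ
      (Sum.elim ![(2:ℝ),-1,-1] ![-s,s,0]) =
      (2*a) • Sum.elim ![(2:ℝ),-1,-1] ![-s,s,0] := by
  rw [fromBlocks_mulVec]
  simp only [Sum.elim_comp_inl, Sum.elim_comp_inr, Matrix.smul_mulVec,
    Pmat_mulVec_u, Qmat_mulVec_w, QmatT_mulVec_u, Pmat_mulVec_w]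
  have has : a * s * s = 3 * a := by rw [mul_assoc, hs]; ring
  funext i
  rcases i with i | i <;> fin_cases i <;>
    · show _ = (2*a) * _
      norm_num [Matrix.vecHead, Matrix.vecTail, Matrix.cons_val_two]
      try linarith [has]

lemma not_isUnit_of_mulVec_eq_zero {n R : Type*} [Fintype n] [DecidableEq n] [CommRing R]
    {M : Matrix n n R} {v : n → R} (hv : v ≠ 0) (h : M *ᵥ v = 0) : ¬ IsUnit M := by
  intro hu
  obtain ⟨u, rfl⟩ := hu
  apply hv
  have h2 : ((↑u⁻¹ : Matrix n n R) * (↑u : Matrix n n R)) *ᵥ v = 0 := by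
    rw [← Matrix.mulVec_mulVec, h, Matrix.mulVec_zero]
  rwa [u.inv_mul, Matrix.one_mulVec] at h2

/-- Eigenvalue claim in the proof of Theorem 2 for the wye--delta block
`G_{YΔ} = [[Re Y2, Re Y3], [Re Y3ᵀ, Re Y2]]`: it is positive semidefinite with
eigenvalues `{0, 2 Re[y_t]}`. -/
theorem G_YDelta_psd_spectrum (yt : ℂ) (h : 0 < yt.re)
    (Y2 Y3 : Matrix (Fin 3) (Fin 3) ℂ)
    (hY2 : Y2 = (yt / 3) • !![(2 : ℂ), -1, -1; -1, 2, -1; -1, -1, 2])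
    (hY3 : Y3 = (yt / (Real.sqrt 3 : ℂ)) • !![(-1 : ℂ), 1, 0; 0, -1, 1; 1, 0, -1])
    (G : Matrix (Fin 3 ⊕ Fin 3) (Fin 3 ⊕ Fin 3) ℝ)
    (hG : G = Matrix.fromBlocks (Y2.map Complex.re) (Y3.map Complex.re)
      ((Y3.map Complex.re)ᵀ) (Y2.map Complex.re)) :
    (∀ x : Fin 3 ⊕ Fin 3 → ℝ, 0 ≤ x ⬝ᵥ (G *ᵥ x)) ∧
      spectrum ℝ G = {0, 2 * yt.re} := by
  set a : ℝ := yt.re with ha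
  set s : ℝ := Real.sqrt 3 with hsdef
  have hs : s * s = 3 := Real.mul_self_sqrt (by norm_num)
  -- Entrywise form of the real parts
  have hmap2 : Y2.map Complex.re = (a/3) • Pmat := by
    subst hY2
    ext i j
    fin_cases i <;> fin_cases j <;>
      norm_num [Pmat, Matrix.map_apply, Matrix.smul_apply, Matrix.vecHead, Matrix.vecTail,
        Complex.div_re, Complex.normSq, ← ha]
  have hmap3 : Y3.map Complex.re = (a*s/3) • Qmat := by
    subst hY3
    ext i j
    fin_cases i <;> fin_cases j <;>
      norm_num [Qmat, Matrix.map_apply, Matrix.smul_apply, Matrix.vecHead, Matrix.vecTail,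
        Complex.div_re, Complex.normSq, ← hsdef, hs, ← ha]
  have hGe : G = fromBlocks ((a/3) • Pmat) ((a*s/3) • Qmat) ((a*s/3) • Qmatᵀ) ((a/3) • Pmat) := by
    rw [hG, hmap2, hmap3, Matrix.transpose_smul]
  -- The key identities
  have hGG : G * G = (2*a) • G := by
    rw [hGe]; exact Gblock_sq a s hs
  have hGT : Gᵀ = G := by
    rw [hGe, fromBlocks_transpose, Matrix.transpose_smul, Matrix.transpose_smul,
      Matrix.transpose_smul, Matrix.transpose_transpose, Pmat_symm]
  have ha0 : (0:ℝ) < a := h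
  -- Positive semidefiniteness
  have hpsd : ∀ x : Fin 3 ⊕ Fin 3 → ℝ, 0 ≤ x ⬝ᵥ (G *ᵥ x) := by
    intro x
    have key : 2*a * (x ⬝ᵥ (G *ᵥ x)) = (G *ᵥ x) ⬝ᵥ (G *ᵥ x) := by
      calc 2*a * (x ⬝ᵥ (G *ᵥ x)) = x ⬝ᵥ ((2*a) • (G *ᵥ x)) := by
            rw [dotProduct_smul]; simp [smul_eq_mul]
        _ = x ⬝ᵥ (G *ᵥ (G *ᵥ x)) := by
            rw [Matrix.mulVec_mulVec, hGG, Matrix.smul_mulVec]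
        _ = (x ᵥ* G) ⬝ᵥ (G *ᵥ x) := by rw [dotProduct_mulVec]
        _ = (G *ᵥ x) ⬝ᵥ (G *ᵥ x) := by
            rw [← Matrix.mulVec_transpose, hGT]
    have hnn : 0 ≤ (G *ᵥ x) ⬝ᵥ (G *ᵥ x) :=
      Finset.sum_nonneg fun i _ => mul_self_nonneg _
    nlinarith [key, hnn]
  refine ⟨hpsd, ?_⟩
  -- Spectrum
  have halg : ∀ μ : ℝ, algebraMap ℝ (Matrix (Fin 3 ⊕ Fin 3) (Fin 3 ⊕ Fin 3) ℝ) μ = μ • 1 :=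
    fun μ => Algebra.algebraMap_eq_smul_one μ
  -- eigenvector for 0
  have hmem0 : (0:ℝ) ∈ spectrum ℝ G := by
    rw [spectrum.mem_iff, halg]
    refine not_isUnit_of_mulVec_eq_zero
      (v := (Sum.elim ![1,1,1] ![1,1,1] : Fin 3 ⊕ Fin 3 → ℝ)) ?_ ?_
    · intro h0
      have := congrFun h0 (Sum.inl 0)
      rw [Sum.elim_inl, Pi.zero_apply, Matrix.cons_val_zero] at this
      exact one_ne_zero this
    · rw [Matrix.sub_mulVec, hGe, Gblock_mulVec_ones]
      simp only [zero_smul, Matrix.zero_mulVec, sub_zero]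
  -- eigenvector for 2a
  have hmem2 : 2*a ∈ spectrum ℝ G := by
    rw [spectrum.mem_iff, halg]
    refine not_isUnit_of_mulVec_eq_zero
      (v := (Sum.elim ![2,-1,-1] ![-s,s,0] : Fin 3 ⊕ Fin 3 → ℝ)) ?_ ?_
    · intro h0
      have := congrFun h0 (Sum.inl 0)
      rw [Sum.elim_inl, Pi.zero_apply, Matrix.cons_val_zero] at this
      exact two_ne_zero this
    · rw [Matrix.sub_mulVec, hGe, Gblock_mulVec_v2 a s hs]
      rw [Matrix.smul_mulVec, Matrix.one_mulVec, sub_self]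
  ext μ
  simp only [Set.mem_insert_iff, Set.mem_singleton_iff]
  constructor
  · intro hμ
    by_contra hne
    push_neg at hne
    obtain ⟨hμ0, hμ2⟩ := hne
    rw [spectrum.mem_iff, halg] at hμ
    apply hμ
    set α : ℝ := μ⁻¹ with hα
    set β : ℝ := (μ * (μ - 2*a))⁻¹ with hβ
    have hμ2' : μ - 2*a ≠ 0 := sub_ne_zero.mpr hμ2
    have hc1 : μ * α = 1 := by rw [hα]; field_simp
    have hc2 : μ * β - α - 2*a*β = 0 := by
      rw [hα, hβ]
      field_simp
      ring
    have expand1 : (μ • 1 - G) * (α • 1 + β • G) =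
        (μ*α) • (1 : Matrix (Fin 3 ⊕ Fin 3) (Fin 3 ⊕ Fin 3) ℝ) + (μ*β - α - 2*a*β) • G := by
      have e : (μ • 1 - G) * (α • 1 + β • G) =
          α • ((μ • 1) * 1) + β • ((μ • 1) * G) - (α • (G * 1) + β • (G * G)) := by
        rw [sub_mul, mul_add, mul_add, Matrix.mul_smul, Matrix.mul_smul, Matrix.mul_smul,
          Matrix.mul_smul]
      rw [e, hGG, Matrix.mul_one, Matrix.mul_one, Matrix.smul_mul, Matrix.one_mul]
      match_scalars <;> ring
    have expand2 : (α • 1 + β • G) * (μ • 1 - G) =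
        (μ*α) • (1 : Matrix (Fin 3 ⊕ Fin 3) (Fin 3 ⊕ Fin 3) ℝ) + (μ*β - α - 2*a*β) • G := by
      have e : (α • 1 + β • G) * (μ • 1 - G) =
          α • (1 * (μ • 1)) + β • (G * (μ • 1)) - (α • (1 * G) + β • (G * G)) := by
        rw [add_mul, mul_sub, mul_sub, Matrix.smul_mul, Matrix.smul_mul, Matrix.smul_mul,
          Matrix.smul_mul]
        abel
      rw [e, hGG, Matrix.one_mul, Matrix.one_mul, Matrix.mul_smul, Matrix.mul_one]
      match_scalars <;> ring
    have h1 : (μ • 1 - G) * (α • 1 + β • G) = 1 := by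
      rw [expand1, hc1, hc2, one_smul, zero_smul, add_zero]
    have h2 : (α • 1 + β • G) * (μ • 1 - G) = 1 := by
      rw [expand2, hc1, hc2, one_smul, zero_smul, add_zero]
    exact ⟨⟨μ • 1 - G, α • 1 + β • G, h1, h2⟩, rfl⟩
  · rintro (rfl | rfl)
    · exact hmem0
    · exact hmem2
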